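/- Let n ≥ 2 and consider the binary Hamming graph H(2n,2) with vertices identified with pairs (β,γ) of vectors β,γ ∈ F_2^n, and let C = {(β,β) : β ∈ F_2^n, wt(β) even}. Fix δ ∈ F_2^n with wt(δ) odd, and let y be the translation y(v) = v + (δ,δ) of F_2^{2n}. Then y is an automorphism of H(2n,2) satisfying y(Γ1(C)) = Γ1(C), but y(C) ≠ C (indeed y(C) ∩ C = ∅). In particular, the setwise stabiliser of Γ1(C) in the automorphism group of H(2n,2) does not fix C setwise. -/

import Mathlib

open Set

/-- Vectors in `F_2^n`. -/
abbrev V (n : ℕ) := Fin n → ZMod 2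

/-- The Hamming distance on `H(2n,2)`, with vertices identified with pairs
`(β,γ)` of vectors `β, γ ∈ F_2^n`. -/
def pd {n : ℕ} (u v : V n × V n) : ℕ :=
  hammingDist u.1 v.1 + hammingDist u.2 v.2

/-- The set of neighbours `Γ₁(S)` of a code `S` in `H(2n,2)`. -/
def NbrsP {n : ℕ} (S : Set (V n × V n)) : Set (V n × V n) :=
  {ν | ν ∉ S ∧ ∃ α ∈ S, pd ν α = 1}

/-- The code `S` has minimum distance `δ`. -/
def IsMinDistP {n : ℕ} (S : Set (V n × V n)) (δ : ℕ) : Prop :=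
  (∀ a ∈ S, ∀ b ∈ S, a ≠ b → δ ≤ pd a b) ∧
  ∃ a ∈ S, ∃ b ∈ S, a ≠ b ∧ pd a b = δ

/-- The repetition-style code `U = {(β,β) : β ∈ F_2^n}`. -/
def Ucode (n : ℕ) : Set (V n × V n) := {p | p.1 = p.2}

/-- The code `C = {(β,β) : β ∈ F_2^n, wt(β) even}`. -/
def Ccode (n : ℕ) : Set (V n × V n) := {p | p.1 = p.2 ∧ Even (hammingNorm p.1)}

lemma zmod2_ne_zero {a : ZMod 2} (h : a ≠ 0) : a = 1 := by
  fin_cases a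
  · exact absurd rfl h
  · rfl

lemma cast_hammingNorm {n : ℕ} (x : V n) : (hammingNorm x : ZMod 2) = ∑ i, x i := by
  rw [hammingNorm, ← Finset.sum_filter_ne_zero Finset.univ]
  rw [Finset.card_eq_sum_ones, Nat.cast_sum]
  refine Finset.sum_congr rfl fun i hi => ?_
  rw [zmod2_ne_zero (Finset.mem_filter.mp hi).2]
  simp

lemma cast_norm_add {n : ℕ} (x y : V n) :
    ((hammingNorm (x + y) : ZMod 2)) = (hammingNorm x : ZMod 2) + hammingNorm y := by
  simp [cast_hammingNorm, Finset.sum_add_distrib]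

lemma hdist_add_right {n : ℕ} (u v w : V n) :
    hammingDist (u + w) (v + w) = hammingDist u v := by
  rw [hammingDist_eq_hammingNorm, hammingDist_eq_hammingNorm]
  congr 1; abel

lemma cast_hdist {n : ℕ} (u v : V n) :
    ((hammingDist u v : ZMod 2)) = (hammingNorm u : ZMod 2) + hammingNorm v := by
  have h : -u + v = u + v := by
    funext i
    simp [sub_eq_add_neg, CharTwo.neg_eq]
  rw [hammingDist_eq_hammingNorm, h, cast_norm_add]

lemma nbrs_eq (n : ℕ) :
    NbrsP (Ccode n) = {p : V n × V n | hammingDist p.1 p.2 = 1} := by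
  ext p
  constructor
  · rintro ⟨-, ⟨a, b⟩, ⟨hab, -⟩, hpd⟩
    obtain rfl : a = b := hab
    simp only [pd] at hpd
    rcases Nat.add_eq_one_iff.mp hpd with ⟨h1, h2⟩ | ⟨h1, h2⟩
    · rw [hammingDist_eq_zero] at h1; rw [Set.mem_setOf_eq, h1, hammingDist_comm]; exact h2
    · rw [hammingDist_eq_zero] at h2; rw [Set.mem_setOf_eq, h2]; exact h1
  · intro hp
    rw [Set.mem_setOf_eq] at hp
    have hne : p.1 ≠ p.2 := by
      intro h; rw [h, hammingDist_self] at hp; exact one_ne_zero hp.symm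
    have hpar : (hammingNorm p.1 : ZMod 2) + hammingNorm p.2 = 1 := by
      rw [← cast_hdist, hp]; norm_num
    refine ⟨fun h => hne h.1, ?_⟩
    by_cases h2 : (hammingNorm p.2 : ZMod 2) = 0
    · refine ⟨(p.2, p.2), ⟨rfl, ZMod.natCast_eq_zero_iff_even.mp h2⟩, ?_⟩
      simp [pd, hp]
    · have h1 : (hammingNorm p.1 : ZMod 2) = 0 := by
        rw [zmod2_ne_zero h2] at hpar
        exact add_eq_right.mp hpar
      refine ⟨(p.1, p.1), ⟨rfl, ZMod.natCast_eq_zero_iff_even.mp h1⟩, ?_⟩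
      simp [pd, hammingDist_comm, hp]

theorem stmt_18 (n : ℕ) (hn : 2 ≤ n) (d : V n) (hd : Odd (hammingNorm d)) :
    (∀ u v, pd (Equiv.addRight ((d, d) : V n × V n) u)
        (Equiv.addRight ((d, d) : V n × V n) v) = pd u v) ∧
    (Equiv.addRight ((d, d) : V n × V n)) '' NbrsP (Ccode n) = NbrsP (Ccode n) ∧
    (Equiv.addRight ((d, d) : V n × V n)) '' Ccode n ≠ Ccode n ∧
    ((Equiv.addRight ((d, d) : V n × V n)) '' Ccode n) ∩ Ccode n = ∅ ∧
    ∃ f : (V n × V n) ≃ (V n × V n),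
      (∀ u v, pd (f u) (f v) = pd u v) ∧
      f '' NbrsP (Ccode n) = NbrsP (Ccode n) ∧
      f '' Ccode n ≠ Ccode n := by
  have hiso : ∀ u v : V n × V n, pd (Equiv.addRight ((d, d) : V n × V n) u)
      (Equiv.addRight ((d, d) : V n × V n) v) = pd u v := by
    intro u v
    simp only [Equiv.coe_addRight, pd, Prod.fst_add, Prod.snd_add, hdist_add_right]
  have hnbrs : (Equiv.addRight ((d, d) : V n × V n)) '' NbrsP (Ccode n) = NbrsP (Ccode n) := by
    rw [nbrs_eq]
    ext q
    constructor
    · rintro ⟨p, hp, rfl⟩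
      simpa only [Set.mem_setOf_eq, Equiv.coe_addRight, Prod.fst_add, Prod.snd_add,
        hdist_add_right] using hp
    · intro hq
      refine ⟨q - (d, d), ?_, by simp⟩
      have : q - ((d, d) : V n × V n) + (d, d) = q := by abel
      simp only [Set.mem_setOf_eq, Prod.fst_sub, Prod.snd_sub]
      rw [← hdist_add_right (q.1 - d) (q.2 - d) d]
      simpa using hq
  have hdisj : ((Equiv.addRight ((d, d) : V n × V n)) '' Ccode n) ∩ Ccode n = ∅ := by
    ext q
    simp only [Set.mem_inter_iff, Set.mem_image, Set.mem_empty_iff_false, iff_false]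
    rintro ⟨⟨p, ⟨hp1, hp2⟩, rfl⟩, hq1, hq2⟩
    simp only [Equiv.coe_addRight] at hq2
    have : (hammingNorm ((p + ((d, d) : V n × V n)).1) : ZMod 2) = 1 := by
      rw [Prod.fst_add, cast_norm_add, ZMod.natCast_eq_zero_iff_even.mpr hp2,
        ZMod.natCast_eq_one_iff_odd.mpr hd, zero_add]
    rw [ZMod.natCast_eq_zero_iff_even.mpr hq2] at this
    exact zero_ne_one this
  have hC0 : ((0, 0) : V n × V n) ∈ Ccode n := ⟨rfl, by simp [hammingNorm_zero]⟩
  have hne : (Equiv.addRight ((d, d) : V n × V n)) '' Ccode n ≠ Ccode n := by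
    intro h
    have : ((0, 0) : V n × V n) ∈
        ((Equiv.addRight ((d, d) : V n × V n)) '' Ccode n) ∩ Ccode n := ⟨by rw [h]; exact hC0, hC0⟩
    rw [hdisj] at this
    exact this
  exact ⟨hiso, hnbrs, hne, hdisj, Equiv.addRight _, hiso, hnbrs, hne⟩
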